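/- Let n, m, k be integers with 1 ≤ m ≤ n and k = ⌊n/2⌋. Then C(n−m, k) / C(n, k) ≤ 2^{1−m}. Equivalently, C(n−m,k)·2^{m−1} ≤ C(n,k). -/
import Mathlib

/-- Halving step: if `a ≤ 2k` and `k ≥ 1`, then `2·C(a-1,k) ≤ C(a,k)`. -/
lemma choose_half_step (a k : ℕ) (hk : 1 ≤ k) (h : a ≤ 2 * k) :
    2 * ((a - 1).choose k) ≤ a.choose k := by
  match a, k with
  | 0, k => simp [Nat.choose_eq_zero_of_lt hk]
  | b + 1, c + 1 =>
    have key : b.choose (c + 1) ≤ b.choose c := by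
      have h1 : b.choose (c + 1) * (c + 1) = b.choose c * (b - c) :=
        Nat.choose_succ_right_eq b c
      have h2 : b - c ≤ c + 1 := by omega
      have : b.choose (c + 1) * (c + 1) ≤ b.choose c * (c + 1) := by
        rw [h1]; exact Nat.mul_le_mul_left _ h2
      exact Nat.le_of_mul_le_mul_right this (by omega)
    have : (b + 1).choose (c + 1) = b.choose c + b.choose (c + 1) :=
      Nat.choose_succ_succ b c
    simp only [Nat.add_sub_cancel]
    omega

theorem choose_ratio_bound (n m : ℕ) (hm : 1 ≤ m) (hmn : m ≤ n) :
    (n - m).choose (n / 2) * 2 ^ (m - 1) ≤ n.choose (n / 2) := by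
  induction m with
  | zero => omega
  | succ m ih =>
    rcases Nat.eq_zero_or_pos m with rfl | hm1
    · simpa using Nat.choose_le_choose (n / 2) (Nat.sub_le n 1)
    · have hmn' : m ≤ n := by omega
      have ih' := ih hm1 hmn'
      have hk : 1 ≤ n / 2 := by omega
      have hstep : 2 * ((n - m - 1).choose (n / 2)) ≤ (n - m).choose (n / 2) :=
        choose_half_step (n - m) (n / 2) hk (by omega)
      have h1 : n - (m + 1) = n - m - 1 := by omega
      have h2 : 2 ^ (m + 1 - 1) = 2 * 2 ^ (m - 1) := by
        rw [Nat.add_sub_cancel]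
        conv_lhs => rw [← Nat.sub_add_cancel hm1]
        rw [pow_succ]; ring
      calc (n - (m + 1)).choose (n / 2) * 2 ^ (m + 1 - 1)
          = (2 * (n - m - 1).choose (n / 2)) * 2 ^ (m - 1) := by rw [h1, h2]; ring
        _ ≤ (n - m).choose (n / 2) * 2 ^ (m - 1) := Nat.mul_le_mul_right _ hstep
        _ ≤ n.choose (n / 2) := ih'
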